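/- arXiv:math/0204324 — 2 statements merged into one kernel-verified Lean document; each statement's English description precedes it below -/
import Mathlib

section
/- Let f : 𝕋^d → [0,1] be a trigonometric polynomial with f̂(k) = 0 whenever ‖k‖_∞ > m. Then P^f is m-dependent: for any two subsets S_1, S_2 ⊂ ℤ^d with ‖e − e'‖_∞ > m for all e ∈ S_1 and e' ∈ S_2, the σ-fields F(S_1) and F(S_2) are independent under P^f. -/
open MeasureTheory Matrix Filter Topology
open scoped ENNReal Real

noncomputable section

abbrev Torus (d : ℕ) : Type := Fin d → AddCircle (1 : ℝ)

abbrev Config (d : ℕ) : Type := (Fin d → ℤ) → Bool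

/-- The character `e_k : x ↦ e^{2πi k·x}` on the `d`-dimensional torus. -/
def charFn {d : ℕ} (k : Fin d → ℤ) (x : Torus d) : ℂ := ∏ i, (fourier (k i) (x i) : ℂ)

/-- The Fourier coefficient `f̂(k) = ∫ f(x) e^{-2πi k·x} dλ_d(x)`. -/
def fCoeff {d : ℕ} (f : Torus d → ℝ) (k : Fin d → ℤ) : ℂ :=
  ∫ x : Torus d, (f x : ℂ) * charFn (-k) x ∂volume

/-- Translation of configurations by `v ∈ ℤ^d`. -/
def shiftC {d : ℕ} (v : Fin d → ℤ) (η : Config d) : Config d := fun k => η (k + v)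

/-- `P` is the determinantal measure associated to `f`. -/
def IsDeterminantal {d : ℕ} (f : Torus d → ℝ) (P : Measure (Config d)) : Prop :=
  ∀ (n : ℕ) (e : Fin n → (Fin d → ℤ)), Function.Injective e →
    (((P {η : Config d | ∀ i, η (e i) = true}).toReal : ℝ) : ℂ) =
      Matrix.det (Matrix.of fun i j : Fin n => fCoeff f (e j - e i))

/-- The σ-field on `{0,1}^{ℤ^d}` generated by the coordinates in `S`. -/
def coordSigma {d : ℕ} (S : Set (Fin d → ℤ)) : MeasurableSpace (Config d) :=
  MeasurableSpace.comap (fun (η : Config d) (j : S) => η (j : Fin d → ℤ)) inferInstance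

namespace Statement5Aux

open ProbabilityTheory MeasurableSpace

variable {d : ℕ}

/-- Cylinder set: `true` on `E`, `false` on `F`. -/
def cyl (E F : Finset (Fin d → ℤ)) : Set (Config d) :=
  {η | (∀ e ∈ E, η e = true) ∧ ∀ e ∈ F, η e = false}

lemma measurableSet_eval (x : Fin d → ℤ) (b : Bool) :
    MeasurableSet {η : Config d | η x = b} := by
  have : {η : Config d | η x = b} = (fun η : Config d => η x) ⁻¹' {b} := rfl
  rw [this]
  exact measurable_pi_apply x (measurableSet_singleton b)

lemma cyl_inter_true (E F : Finset (Fin d → ℤ)) (x : Fin d → ℤ) :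
    cyl E F ∩ {η : Config d | η x = true} = cyl (insert x E) F := by
  ext η
  simp only [cyl, Set.mem_inter_iff, Set.mem_setOf_eq, Finset.mem_insert]
  constructor
  · rintro ⟨⟨h1, h2⟩, h3⟩
    exact ⟨fun e he => he.elim (fun h => h ▸ h3) (h1 e), h2⟩
  · rintro ⟨h1, h2⟩
    exact ⟨⟨fun e he => h1 e (Or.inr he), h2⟩, h1 x (Or.inl rfl)⟩

lemma cyl_diff_true (E F : Finset (Fin d → ℤ)) (x : Fin d → ℤ) :
    cyl E F \ {η : Config d | η x = true} = cyl E (insert x F) := by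
  ext η
  simp only [cyl, Set.mem_diff, Set.mem_setOf_eq, Finset.mem_insert]
  constructor
  · rintro ⟨⟨h1, h2⟩, h3⟩
    refine ⟨h1, fun e he => he.elim (fun h => h ▸ (by simpa using h3)) (h2 e)⟩
  · rintro ⟨h1, h2⟩
    exact ⟨⟨h1, fun e he => h2 e (Or.inr he)⟩, by simp [h2 x (Or.inl rfl)]⟩

/-- The probability of a cylinder, as a real number. -/
def Q (P : Measure (Config d)) (E F : Finset (Fin d → ℤ)) : ℝ := (P (cyl E F)).toReal

lemma Q_rec (P : Measure (Config d)) [IsFiniteMeasure P] (E F : Finset (Fin d → ℤ))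
    (x : Fin d → ℤ) :
    Q P E F = Q P (insert x E) F + Q P E (insert x F) := by
  have h := measure_inter_add_diff (μ := P) (cyl E F) (measurableSet_eval x true)
  rw [cyl_inter_true, cyl_diff_true] at h
  have := congrArg ENNReal.toReal h
  rw [ENNReal.toReal_add (measure_ne_top P _) (measure_ne_top P _)] at this
  exact this.symm

/-- For an enumeration whose range is `E`, the "all true on range" set is `cyl E ∅`. -/
lemma setOf_forall_eq {n : ℕ} (E : Finset (Fin d → ℤ)) (e : Fin n → (Fin d → ℤ))
    (he : Set.range e = (E : Set (Fin d → ℤ))) :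
    {η : Config d | ∀ i, η (e i) = true} = cyl E ∅ := by
  ext η
  simp only [cyl, Set.mem_setOf_eq, Finset.notMem_empty, false_implies, implies_true, and_true]
  constructor
  · intro h x hx
    obtain ⟨i, hi⟩ := he ▸ (Finset.mem_coe.mpr hx : x ∈ (E : Set (Fin d → ℤ)))
    exact hi ▸ h i
  · intro h i
    exact h _ (by rw [← Finset.mem_coe, ← he]; exact ⟨i, rfl⟩)

/-- Enumeration of a finset. -/
def enum (E : Finset (Fin d → ℤ)) : Fin E.card → (Fin d → ℤ) :=
  fun i => (E.equivFin.symm i : Fin d → ℤ)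

lemma enum_injective (E : Finset (Fin d → ℤ)) : Function.Injective (enum E) :=
  fun i j h => E.equivFin.symm.injective (Subtype.ext h)

lemma enum_range (E : Finset (Fin d → ℤ)) :
    Set.range (enum E) = (E : Set (Fin d → ℤ)) := by
  ext x
  constructor
  · rintro ⟨i, rfl⟩; exact (E.equivFin.symm i).2
  · intro hx; exact ⟨E.equivFin ⟨x, hx⟩, by simp [enum]⟩

/-- Factorization of the correlation determinant for separated finsets. -/
lemma rho_mul (f : Torus d → ℝ) (m : ℕ)
    (hfm : ∀ k : Fin d → ℤ, (∃ i, (m : ℤ) < |k i|) → fCoeff f k = 0)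
    (P : Measure (Config d)) (hPdet : IsDeterminantal f P)
    (E₁ E₂ : Finset (Fin d → ℤ))
    (hsep : ∀ e ∈ E₁, ∀ e' ∈ E₂, ∃ i, (m : ℤ) < |e i - e' i|) :
    Q P (E₁ ∪ E₂) ∅ = Q P E₁ ∅ * Q P E₂ ∅ := by
  classical
  set n₁ := E₁.card
  set n₂ := E₂.card
  set e₁ := enum E₁ with he₁
  set e₂ := enum E₂ with he₂
  have h₁mem : ∀ i, e₁ i ∈ E₁ := fun i => by
    have : e₁ i ∈ Set.range e₁ := ⟨i, rfl⟩
    rwa [enum_range] at this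
  have h₂mem : ∀ i, e₂ i ∈ E₂ := fun i => by
    have : e₂ i ∈ Set.range e₂ := ⟨i, rfl⟩
    rwa [enum_range] at this
  have hne : ∀ a b, e₁ a ≠ e₂ b := by
    intro a b hab
    obtain ⟨i, hi⟩ := hsep _ (h₁mem a) _ (h₂mem b)
    rw [hab] at hi
    simp at hi
    omega
  set eS : Fin n₁ ⊕ Fin n₂ → (Fin d → ℤ) := Sum.elim e₁ e₂ with heS
  set eU : Fin (n₁ + n₂) → (Fin d → ℤ) := eS ∘ finSumFinEquiv.symm with heU
  have heSinj : Function.Injective eS :=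
    Function.Injective.sumElim (enum_injective E₁) (enum_injective E₂) hne
  have heUinj : Function.Injective eU := heSinj.comp finSumFinEquiv.symm.injective
  have heUrange : Set.range eU = ((E₁ ∪ E₂ : Finset _) : Set (Fin d → ℤ)) := by
    rw [heU, Set.range_comp, Equiv.range_eq_univ, Set.image_univ, heS, Set.Sum.elim_range,
      enum_range, enum_range, Finset.coe_union]
  have hdetU := hPdet (n₁ + n₂) eU heUinj
  have hdet₁ := hPdet n₁ e₁ (enum_injective E₁)
  have hdet₂ := hPdet n₂ e₂ (enum_injective E₂)
  rw [setOf_forall_eq (E₁ ∪ E₂) eU heUrange] at hdetU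
  rw [setOf_forall_eq E₁ e₁ (enum_range E₁)] at hdet₁
  rw [setOf_forall_eq E₂ e₂ (enum_range E₂)] at hdet₂
  set A : Matrix (Fin n₁) (Fin n₁) ℂ := Matrix.of fun i j => fCoeff f (e₁ j - e₁ i)
  set D : Matrix (Fin n₂) (Fin n₂) ℂ := Matrix.of fun i j => fCoeff f (e₂ j - e₂ i)
  set N : Matrix (Fin n₁ ⊕ Fin n₂) (Fin n₁ ⊕ Fin n₂) ℂ :=
    Matrix.of fun i j => fCoeff f (eS j - eS i) with hN
  have hreidx : (Matrix.of fun i j : Fin (n₁ + n₂) => fCoeff f (eU j - eU i)) =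
      Matrix.reindex finSumFinEquiv finSumFinEquiv N := by
    ext i j
    simp [Matrix.reindex_apply, Matrix.submatrix_apply, heU, hN]
  have hblocks : N = Matrix.fromBlocks A 0 0 D := by
    ext i j
    rcases i with i | i <;> rcases j with j | j
    · simp [hN, heS, Matrix.fromBlocks, A]
    · have : fCoeff f (e₂ j - e₁ i) = 0 := by
        apply hfm
        obtain ⟨k, hk⟩ := hsep _ (h₁mem i) _ (h₂mem j)
        exact ⟨k, by rw [Pi.sub_apply, abs_sub_comm]; exact hk⟩
      simp [hN, heS, Matrix.fromBlocks, this]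
    · have : fCoeff f (e₁ j - e₂ i) = 0 := by
        apply hfm
        obtain ⟨k, hk⟩ := hsep _ (h₁mem j) _ (h₂mem i)
        exact ⟨k, hk⟩
      simp [hN, heS, Matrix.fromBlocks, this]
    · simp [hN, heS, Matrix.fromBlocks, D]
  have hdet : Matrix.det (Matrix.of fun i j : Fin (n₁ + n₂) => fCoeff f (eU j - eU i)) =
      Matrix.det A * Matrix.det D := by
    rw [hreidx, Matrix.det_reindex_self, hblocks, Matrix.det_fromBlocks_zero₂₁]
  have : ((Q P (E₁ ∪ E₂) ∅ : ℝ) : ℂ) = ((Q P E₁ ∅ * Q P E₂ ∅ : ℝ) : ℂ) := by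
    rw [Complex.ofReal_mul]
    show ((P (cyl (E₁ ∪ E₂) ∅)).toReal : ℂ) = _
    rw [hdetU, hdet, ← hdet₁, ← hdet₂]
    rfl
  exact_mod_cast this

/-- Factorization of cylinder probabilities when the negative part on side 2 is empty. -/
lemma Q_mul_empty (f : Torus d → ℝ) (m : ℕ)
    (hfm : ∀ k : Fin d → ℤ, (∃ i, (m : ℤ) < |k i|) → fCoeff f k = 0)
    (P : Measure (Config d)) [IsFiniteMeasure P] (hPdet : IsDeterminantal f P)
    (S₁ S₂ : Set (Fin d → ℤ))
    (hsep : ∀ e ∈ S₁, ∀ e' ∈ S₂, ∃ i, (m : ℤ) < |e i - e' i|)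
    (F₁ : Finset (Fin d → ℤ)) :
    ∀ E₁ E₂ : Finset (Fin d → ℤ), ↑E₁ ⊆ S₁ → ↑F₁ ⊆ S₁ → ↑E₂ ⊆ S₂ →
      Q P (E₁ ∪ E₂) F₁ = Q P E₁ F₁ * Q P E₂ ∅ := by
  classical
  induction F₁ using Finset.induction with
  | empty =>
    intro E₁ E₂ hE₁ _ hE₂
    exact rho_mul f m hfm P hPdet E₁ E₂ fun e he e' he' =>
      hsep e (hE₁ he) e' (hE₂ he')
  | @insert x s hx ih =>
    intro E₁ E₂ hE₁ hsx hE₂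
    have hxS : x ∈ S₁ := hsx (by simp)
    have hsS : (s : Set (Fin d → ℤ)) ⊆ S₁ := by
      refine subset_trans ?_ hsx
      simp [Finset.coe_insert, Set.subset_insert]
    have hr1 := Q_rec P (E₁ ∪ E₂) s x
    rw [← Finset.insert_union] at hr1
    have hr2 := Q_rec P E₁ s x
    have hiE : (↑(insert x E₁) : Set (Fin d → ℤ)) ⊆ S₁ := by
      rw [Finset.coe_insert]
      exact Set.insert_subset hxS hE₁
    have i1 := ih E₁ E₂ hE₁ hsS hE₂
    have i2 := ih (insert x E₁) E₂ hiE hsS hE₂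
    have key : Q P E₁ (insert x s) * Q P E₂ ∅ =
        Q P E₁ s * Q P E₂ ∅ - Q P (insert x E₁) s * Q P E₂ ∅ := by rw [hr2]; ring
    linarith [key, hr1, i1, i2]

/-- Full factorization of cylinder probabilities for separated regions. -/
lemma Q_mul (f : Torus d → ℝ) (m : ℕ)
    (hfm : ∀ k : Fin d → ℤ, (∃ i, (m : ℤ) < |k i|) → fCoeff f k = 0)
    (P : Measure (Config d)) [IsFiniteMeasure P] (hPdet : IsDeterminantal f P)
    (S₁ S₂ : Set (Fin d → ℤ))
    (hsep : ∀ e ∈ S₁, ∀ e' ∈ S₂, ∃ i, (m : ℤ) < |e i - e' i|)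
    (F₂ : Finset (Fin d → ℤ)) :
    ∀ E₁ F₁ E₂ : Finset (Fin d → ℤ), ↑E₁ ⊆ S₁ → ↑F₁ ⊆ S₁ → ↑E₂ ⊆ S₂ → ↑F₂ ⊆ S₂ →
      Q P (E₁ ∪ E₂) (F₁ ∪ F₂) = Q P E₁ F₁ * Q P E₂ F₂ := by
  classical
  induction F₂ using Finset.induction with
  | empty =>
    intro E₁ F₁ E₂ hE₁ hF₁ hE₂ _
    rw [Finset.union_empty]
    exact Q_mul_empty f m hfm P hPdet S₁ S₂ hsep F₁ E₁ E₂ hE₁ hF₁ hE₂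
  | @insert x s hx ih =>
    intro E₁ F₁ E₂ hE₁ hF₁ hE₂ hsx
    have hxS : x ∈ S₂ := hsx (by simp)
    have hsS : (s : Set (Fin d → ℤ)) ⊆ S₂ := by
      refine subset_trans ?_ hsx
      simp [Finset.coe_insert, Set.subset_insert]
    have hiE : (↑(insert x E₂) : Set (Fin d → ℤ)) ⊆ S₂ := by
      rw [Finset.coe_insert]
      exact Set.insert_subset hxS hE₂
    have hr1 := Q_rec P (E₁ ∪ E₂) (F₁ ∪ s) x
    rw [← Finset.union_insert (s := E₁) (t := E₂)] at hr1
    rw [← Finset.union_insert (s := F₁) (t := s)] at hr1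
    have hr2 := Q_rec P E₂ s x
    have i1 := ih E₁ F₁ E₂ hE₁ hF₁ hE₂ hsS
    have i2 := ih E₁ F₁ (insert x E₂) hE₁ hF₁ hiE hsS
    have key : Q P E₁ F₁ * Q P E₂ (insert x s) =
        Q P E₁ F₁ * Q P E₂ s - Q P E₁ F₁ * Q P (insert x E₂) s := by rw [hr2]; ring
    linarith [key, hr1, i1, i2]

/-- Cylinders based in `S`. -/
def cylSystem (S : Set (Fin d → ℤ)) : Set (Set (Config d)) :=
  {A | ∃ E F : Finset (Fin d → ℤ), ↑E ⊆ S ∧ ↑F ⊆ S ∧ A = cyl E F}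

lemma cyl_inter_cyl (E F E' F' : Finset (Fin d → ℤ)) :
    cyl E F ∩ cyl E' F' = cyl (E ∪ E') (F ∪ F') := by
  ext η
  simp only [cyl, Set.mem_inter_iff, Set.mem_setOf_eq, Finset.mem_union]
  constructor
  · rintro ⟨⟨a1, a2⟩, b1, b2⟩
    exact ⟨fun e he => he.elim (a1 e) (b1 e), fun e he => he.elim (a2 e) (b2 e)⟩
  · rintro ⟨h1, h2⟩
    exact ⟨⟨fun e he => h1 e (Or.inl he), fun e he => h2 e (Or.inl he)⟩,
      fun e he => h1 e (Or.inr he), fun e he => h2 e (Or.inr he)⟩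

lemma isPiSystem_cylSystem (S : Set (Fin d → ℤ)) : IsPiSystem (cylSystem S) := by
  rintro A ⟨E, F, hE, hF, rfl⟩ B ⟨E', F', hE', hF', rfl⟩ -
  exact ⟨E ∪ E', F ∪ F', by
    push_cast; exact Set.union_subset hE hE', by push_cast; exact Set.union_subset hF hF',
    cyl_inter_cyl E F E' F'⟩

lemma coordSigma_le_pi (S : Set (Fin d → ℤ)) :
    coordSigma S ≤ (inferInstance : MeasurableSpace (Config d)) :=
  Measurable.comap_le (measurable_pi_lambda _ fun _ => measurable_pi_apply _)

lemma coordSigma_eq_generateFrom (S : Set (Fin d → ℤ)) :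
    coordSigma S = MeasurableSpace.generateFrom (cylSystem S) := by
  apply le_antisymm
  · have hmeas : @Measurable _ _ (generateFrom (cylSystem S)) _
        (fun (η : Config d) (j : S) => η (j : Fin d → ℤ)) := by
      letI : MeasurableSpace (Config d) := generateFrom (cylSystem S)
      refine measurable_pi_lambda _ fun j => ?_
      refine measurable_to_bool ?_
      have h : (fun η : Config d => η (j : Fin d → ℤ)) ⁻¹' {true} = cyl {(j : Fin d → ℤ)} ∅ := by
        ext η; simp [cyl]
      rw [h]
      exact measurableSet_generateFrom ⟨{(j : Fin d → ℤ)}, ∅, by simp [j.2], by simp, rfl⟩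
    exact Measurable.comap_le hmeas
  · apply generateFrom_le
    rintro A ⟨E, F, hE, hF, rfl⟩
    refine measurableSet_comap.mpr ?_
    refine ⟨(⋂ e : E, {g : S → Bool | g ⟨e, hE e.2⟩ = true}) ∩
      ⋂ e : F, {g : S → Bool | g ⟨e, hF e.2⟩ = false}, ?_, ?_⟩
    · refine MeasurableSet.inter ?_ ?_ <;>
      · refine MeasurableSet.iInter fun e => ?_
        exact measurable_pi_apply _ (measurableSet_singleton _)
    · ext η
      simp only [Set.mem_preimage, Set.mem_inter_iff, Set.mem_iInter, Set.mem_setOf_eq, cyl]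
      constructor
      · rintro ⟨h1, h2⟩
        exact ⟨fun e he => h1 ⟨e, he⟩, fun e he => h2 ⟨e, he⟩⟩
      · rintro ⟨h1, h2⟩
        exact ⟨fun e => h1 e e.2, fun e => h2 e e.2⟩

end Statement5Aux

open Statement5Aux ProbabilityTheory in
/-- If `f` is a trigonometric polynomial with `f̂(k) = 0` whenever
`‖k‖_∞ > m`, then `P^f` is `m`-dependent: the σ-fields of two regions at `ℓ∞`-distance
greater than `m` are independent. -/
theorem statement5 {d : ℕ} (f : Torus d → ℝ) (hf : Measurable f)
    (hf01 : ∀ x, f x ∈ Set.Icc (0 : ℝ) 1) (m : ℕ)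
    (hfm : ∀ k : Fin d → ℤ, (∃ i, (m : ℤ) < |k i|) → fCoeff f k = 0)
    (P : Measure (Config d)) (hP : IsProbabilityMeasure P)
    (hPdet : IsDeterminantal f P) :
    ∀ S₁ S₂ : Set (Fin d → ℤ),
      (∀ e ∈ S₁, ∀ e' ∈ S₂, ∃ i, (m : ℤ) < |e i - e' i|) →
      ∀ A B : Set (Config d),
        MeasurableSet[coordSigma S₁] A → MeasurableSet[coordSigma S₂] B →
        P (A ∩ B) = P A * P B := by
  intro S₁ S₂ hsep A B hA hB
  haveI := hP
  have hIndepSets : IndepSets (cylSystem S₁) (cylSystem S₂) P := by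
    rw [IndepSets_iff]
    rintro a b ⟨E₁, F₁, hE₁, hF₁, rfl⟩ ⟨E₂, F₂, hE₂, hF₂, rfl⟩
    rw [cyl_inter_cyl]
    have hreal := Q_mul f m hfm P hPdet S₁ S₂ hsep F₂ E₁ F₁ E₂ hE₁ hF₁ hE₂ hF₂
    have h1 : P (cyl (E₁ ∪ E₂) (F₁ ∪ F₂)) ≠ ⊤ := measure_ne_top P _
    have h2 : P (cyl E₁ F₁) * P (cyl E₂ F₂) ≠ ⊤ :=
      ENNReal.mul_ne_top (measure_ne_top P _) (measure_ne_top P _)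
    rw [← ENNReal.toReal_eq_toReal_iff' h1 h2, ENNReal.toReal_mul]
    exact hreal
  have hind : Indep (coordSigma S₁) (coordSigma S₂) P :=
    IndepSets.indep (coordSigma_le_pi S₁) (coordSigma_le_pi S₂)
      (isPiSystem_cylSystem S₁) (isPiSystem_cylSystem S₂)
      (coordSigma_eq_generateFrom S₁) (coordSigma_eq_generateFrom S₂) hIndepSets
  exact (Indep_iff _ _ _).mp hind A B hA hB

end
end

section
/- Let E be a countable set, H a closed subspace of ℓ²(E), and A, B finite disjoint subsets of E. Then P^H[η(e)=1 for all e ∈ A and η(e)=0 for all e ∈ B] > 0 if and only if the family {P_H e}_{e∈A} ∪ {P_{H^⊥} e}_{e∈B} is linearly independent in ℓ²(E). -/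
open MeasureTheory Matrix Filter Topology
open scoped ENNReal ComplexOrder

noncomputable section

/-- The complex Hilbert space `ℓ²(E)`. -/
abbrev l2 (E : Type) : Type := lp (fun _ : E => ℂ) 2

/-- The standard orthonormal basis vector of `ℓ²(E)` at `e ∈ E`. -/
def stdBasis {E : Type} [DecidableEq E] (e : E) : l2 E := lp.single 2 e (1 : ℂ)

/-- `P` is the determinantal probability measure `P^H` on `{0,1}^E` associated to the
closed subspace `H ⊆ ℓ²(E)`. -/
def IsDeterminantalSubspace {E : Type} [DecidableEq E] (H : Submodule ℂ (l2 E))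
    [Submodule.HasOrthogonalProjection H] (P : Measure (E → Bool)) : Prop :=
  ∀ (n : ℕ) (e : Fin n → E), Function.Injective e →
    (((P {η : E → Bool | ∀ i, η (e i) = true}).toReal : ℝ) : ℂ) =
      Matrix.det (Matrix.of fun i j : Fin n =>
        inner (𝕜 := ℂ) ((Submodule.orthogonalProjectionOnto H (stdBasis (e i)) : l2 E)) (stdBasis (e j)))

set_option linter.unusedSectionVars false

lemma orthogonalProjection_orthogonal_val {F : Type*} [NormedAddCommGroup F]
    [InnerProductSpace ℂ F] (K : Submodule ℂ F) [K.HasOrthogonalProjection] (u : F) :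
    (Kᗮ.orthogonalProjectionOnto u : F) = u - K.orthogonalProjectionOnto u :=
  Submodule.starProjection_orthogonal_val u

lemma orthogonalProjection_inner_eq_zero {F : Type*} [NormedAddCommGroup F]
    [InnerProductSpace ℂ F] {K : Submodule ℂ F} [K.HasOrthogonalProjection] (v w : F)
    (hw : w ∈ K) : inner ℂ (v - K.orthogonalProjectionOnto v) w = 0 :=
  Submodule.starProjection_inner_eq_zero v w hw

section Aux

variable {E : Type} [DecidableEq E]

local notation "⟪" x ", " y "⟫" => inner (𝕜 := ℂ) x y

variable {E : Type} [DecidableEq E]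

lemma inner_stdBasis (e f : E) : ⟪_root_.stdBasis e, _root_.stdBasis f⟫ = if e = f then 1 else 0 := by
  unfold _root_.stdBasis
  rw [lp.inner_single_left]
  by_cases h : e = f
  · subst h
    rw [lp.single_apply_self, if_pos rfl, RCLike.inner_apply]
    simp
  · rw [lp.single_apply_ne (E := fun _ : E => ℂ) 2 f (1 : ℂ) h, if_neg h, RCLike.inner_apply]
    simp

lemma inner_proj_right (K : Submodule ℂ (l2 E)) [Submodule.HasOrthogonalProjection K] (u y : l2 E) :
    ⟪(Submodule.orthogonalProjectionOnto K u : l2 E), y⟫ =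
      ⟪(Submodule.orthogonalProjectionOnto K u : l2 E), (Submodule.orthogonalProjectionOnto K y : l2 E)⟫ := by
  have h : ⟪y - (Submodule.orthogonalProjectionOnto K y : l2 E), (Submodule.orthogonalProjectionOnto K u : l2 E)⟫ = 0 :=
    orthogonalProjection_inner_eq_zero y _ (Submodule.orthogonalProjectionOnto K u).2
  have h' : ⟪(Submodule.orthogonalProjectionOnto K u : l2 E), y - (Submodule.orthogonalProjectionOnto K y : l2 E)⟫ = 0 := by
    rw [← inner_conj_symm, h, map_zero]
  rw [inner_sub_right, sub_eq_zero] at h'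
  exact h'

variable (H : Submodule ℂ (l2 E)) [Submodule.HasOrthogonalProjection H]

def projKer (e f : E) : ℂ := ⟪(Submodule.orthogonalProjectionOnto H (_root_.stdBasis e) : l2 E), _root_.stdBasis f⟫

def detMat {ι : Type} [Fintype ι] [DecidableEq ι] (g : ι → E) (s : ι → Bool) : Matrix ι ι ℂ :=
  Matrix.of fun i j =>
    if s i then projKer H (g i) (g j) else (if i = j then 1 else 0) - projKer H (g i) (g j)

def vfam {ι : Type} (g : ι → E) (s : ι → Bool) : ι → l2 E := fun i =>
  if s i then (Submodule.orthogonalProjectionOnto H (_root_.stdBasis (g i)) : l2 E)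
  else (Submodule.orthogonalProjectionOnto Hᗮ (_root_.stdBasis (g i)) : l2 E)

variable {ι : Type} [Fintype ι] [DecidableEq ι]

lemma detMat_apply_inner {g : ι → E} (hg : Function.Injective g) (s : ι → Bool) (i j : ι) :
    detMat H g s i j = ⟪vfam H g s i, _root_.stdBasis (g j)⟫ := by
  by_cases hsi : s i
  · simp [detMat, vfam, hsi, projKer]
  · simp only [detMat, vfam, hsi, Matrix.of_apply, if_false, Bool.false_eq_true]
    rw [orthogonalProjection_orthogonal_val, inner_sub_left, inner_stdBasis]
    have h1 : (if g i = g j then (1 : ℂ) else 0) = (if i = j then 1 else 0) := by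
      simp only [hg.eq_iff]
    rw [h1]
    rfl

lemma inner_std_sum {g : ι → E} (hg : Function.Injective g) (d : ι → ℂ) (i : ι) :
    ⟪_root_.stdBasis (g i), ∑ j, d j • _root_.stdBasis (g j)⟫ = d i := by
  rw [inner_sum]
  simp only [inner_smul_right, inner_stdBasis, hg.eq_iff]
  simp [Finset.sum_ite_eq]

lemma mulVec_apply_inner {g : ι → E} (hg : Function.Injective g) (s : ι → Bool) (c : ι → ℂ)
    (i : ι) :
    (detMat H g s *ᵥ c) i = ⟪vfam H g s i, ∑ j, c j • _root_.stdBasis (g j)⟫ := by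
  rw [inner_sum, Matrix.mulVec, dotProduct]
  refine Finset.sum_congr rfl fun j _ => ?_
  rw [detMat_apply_inner H hg, inner_smul_right, mul_comm]

set_option maxHeartbeats 1000000 in
lemma key_iff {g : ι → E} (hg : Function.Injective g) (s : ι → Bool) (c : ι → ℂ) :
    detMat H g s *ᵥ c = 0 ↔ ∑ i, c i • vfam H g s i = 0 := by
  classical
  set xA : l2 E := ∑ i, (if s i then c i else 0) • _root_.stdBasis (g i) with hxA
  set xB : l2 E := ∑ i, (if s i then 0 else c i) • _root_.stdBasis (g i) with hxB
  set x : l2 E := ∑ j, c j • _root_.stdBasis (g j) with hxdef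
  have hx : x = xA + xB := by
    rw [hxA, hxB, ← Finset.sum_add_distrib]
    refine Finset.sum_congr rfl fun i _ => ?_
    by_cases hsi : s i <;> simp [hsi]
  set a : l2 E := (Submodule.orthogonalProjectionOnto H xA : l2 E) with ha
  set b : l2 E := (Submodule.orthogonalProjectionOnto Hᗮ xB : l2 E) with hb
  have hPA : a = ∑ i, (if s i then c i else 0) • (Submodule.orthogonalProjectionOnto H (_root_.stdBasis (g i)) : l2 E) := by
    rw [ha, hxA, map_sum]
    push_cast
    refine Finset.sum_congr rfl fun i _ => ?_
    rw [_root_.map_smul]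
    rfl
  have hPB : b = ∑ i, (if s i then 0 else c i) • (Submodule.orthogonalProjectionOnto Hᗮ (_root_.stdBasis (g i)) : l2 E) := by
    rw [hb, hxB, map_sum]
    push_cast
    refine Finset.sum_congr rfl fun i _ => ?_
    rw [_root_.map_smul]
    rfl
  have hw : ∑ i, c i • vfam H g s i = a + b := by
    rw [hPA, hPB, ← Finset.sum_add_distrib]
    refine Finset.sum_congr rfl fun i _ => ?_
    by_cases hsi : s i <;> simp [vfam, hsi]
  -- inner products of basis sums
  have hstdA : ∀ i, s i = false → ⟪_root_.stdBasis (g i), xA⟫ = 0 := by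
    intro i hi
    rw [hxA, inner_std_sum hg]
    simp [hi]
  have hstdB : ∀ i, s i = true → ⟪_root_.stdBasis (g i), xB⟫ = 0 := by
    intro i hi
    rw [hxB, inner_std_sum hg]
    simp [hi]
  constructor
  · intro h
    -- each ⟪vfam i, x⟫ = 0
    have hvi : ∀ i, ⟪vfam H g s i, x⟫ = 0 := by
      intro i
      have h2 := congrFun h i
      rwa [mulVec_apply_inner H hg s c i, ← hxdef, Pi.zero_apply] at h2
    have hwx : ⟪a + b, x⟫ = 0 := by
      rw [← hw, sum_inner]
      simp only [inner_smul_left]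
      exact Finset.sum_eq_zero fun i _ => by rw [hvi i, mul_zero]
    -- compute the real part
    have haxA : ⟪a, xA⟫ = ⟪a, a⟫ := by
      rw [ha, inner_proj_right]
    have hbxB : ⟪b, xB⟫ = ⟪b, b⟫ := by
      rw [hb, inner_proj_right]
    have hABzero : ⟪xB, xA⟫ = 0 := by
      rw [hxB, sum_inner]
      refine Finset.sum_eq_zero fun i _ => ?_
      rw [inner_smul_left]
      by_cases hsi : s i
      · simp [hsi]
      · rw [hstdA i (by simp [hsi]), mul_zero]
    have hbxA : ⟪b, xA⟫ = -(starRingEnd ℂ) ⟪a, xB⟫ := by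
      rw [hb, orthogonalProjection_orthogonal_val, inner_sub_left, hABzero, zero_sub, neg_inj]
      rw [inner_proj_right H xB xA, ← inner_conj_symm, ← inner_proj_right H xA xB, ← ha]
    have hinner : ⟪a, a⟫ + ⟪b, b⟫ + (⟪a, xB⟫ - (starRingEnd ℂ) ⟪a, xB⟫) = 0 := by
      rw [hx, inner_add_left, inner_add_right, inner_add_right, haxA, hbxB, hbxA] at hwx
      linear_combination hwx
    have hre := congrArg Complex.re hinner
    simp only [Complex.add_re, Complex.sub_re, Complex.conj_re, sub_self, add_zero,
      Complex.zero_re] at hre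
    have hna : Complex.re ⟪a, a⟫ = ‖a‖ ^ 2 := (norm_sq_eq_re_inner (𝕜 := ℂ) a).symm
    have hnb : Complex.re ⟪b, b⟫ = ‖b‖ ^ 2 := (norm_sq_eq_re_inner (𝕜 := ℂ) b).symm
    rw [hna, hnb] at hre
    have hA0 : a = 0 := by
      have h5 : ‖a‖ = 0 := by nlinarith [norm_nonneg a, norm_nonneg b]
      exact norm_eq_zero.1 h5
    have hB0 : b = 0 := by
      have h5 : ‖b‖ = 0 := by nlinarith [norm_nonneg a, norm_nonneg b]
      exact norm_eq_zero.1 h5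
    rw [hw, hA0, hB0, add_zero]
  · intro h
    -- a + b = 0 with a ∈ H, b ∈ Hᗮ, hence both zero
    have hab : a + b = 0 := by rw [← hw, h]
    have haH : a ∈ H := (Submodule.orthogonalProjectionOnto H xA).2
    have hbH : b ∈ Hᗮ := (Submodule.orthogonalProjectionOnto Hᗮ xB).2
    have habz : ⟪a, b⟫ = 0 := hbH a haH
    have hA0 : a = 0 := by
      have : ⟪a, a⟫ = 0 := by
        have := congrArg (fun y => ⟪a, y⟫) hab
        simpa [inner_add_right, habz] using this
      exact inner_self_eq_zero.1 this
    have hB0 : b = 0 := by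
      have := hab
      rw [hA0, zero_add] at this
      exact this
    funext i
    rw [mulVec_apply_inner H hg s c i, ← hxdef, hx, inner_add_right]
    by_cases hsi : s i
    · have hv : vfam H g s i = (Submodule.orthogonalProjectionOnto H (_root_.stdBasis (g i)) : l2 E) := by
        simp [vfam, hsi]
      rw [hv]
      have h1 : ⟪(Submodule.orthogonalProjectionOnto H (_root_.stdBasis (g i)) : l2 E), xA⟫ = 0 := by
        rw [inner_proj_right, ← ha, hA0, inner_zero_right]
      have h2 : ⟪(Submodule.orthogonalProjectionOnto H (_root_.stdBasis (g i)) : l2 E), xB⟫ = 0 := by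
        have hsplit : (Submodule.orthogonalProjectionOnto H (_root_.stdBasis (g i)) : l2 E) =
            _root_.stdBasis (g i) - (Submodule.orthogonalProjectionOnto Hᗮ (_root_.stdBasis (g i)) : l2 E) := by
          rw [orthogonalProjection_orthogonal_val]
          abel
        rw [hsplit, inner_sub_left, hstdB i (by simpa using hsi)]
        rw [inner_proj_right, ← hb, hB0, inner_zero_right, sub_zero]
      rw [h1, h2, add_zero]
      rfl
    · have hv : vfam H g s i = (Submodule.orthogonalProjectionOnto Hᗮ (_root_.stdBasis (g i)) : l2 E) := by
        simp [vfam, hsi]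
      rw [hv]
      have h2 : ⟪(Submodule.orthogonalProjectionOnto Hᗮ (_root_.stdBasis (g i)) : l2 E), xB⟫ = 0 := by
        rw [inner_proj_right, ← hb, hB0, inner_zero_right]
      have h1 : ⟪(Submodule.orthogonalProjectionOnto Hᗮ (_root_.stdBasis (g i)) : l2 E), xA⟫ = 0 := by
        rw [orthogonalProjection_orthogonal_val, inner_sub_left,
          hstdA i (by simp [hsi]), inner_proj_right, ← ha, hA0, inner_zero_right, sub_zero]
      rw [h1, h2, add_zero]
      rfl

lemma det_ne_zero_iff_linearIndependent {g : ι → E} (hg : Function.Injective g) (s : ι → Bool) :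
    (detMat H g s).det ≠ 0 ↔ LinearIndependent ℂ (vfam H g s) := by
  rw [Fintype.linearIndependent_iff]
  rw [← not_iff_not]
  push_neg
  rw [← Matrix.exists_mulVec_eq_zero_iff]
  constructor
  · rintro ⟨c, hc, hmc⟩
    refine ⟨c, (key_iff H hg s c).1 hmc, ?_⟩
    by_contra hall
    push_neg at hall
    exact hc (funext fun i => by by_contra hne; exact hne (by simpa using hall i))
  · rintro ⟨c, hsum, i, hi⟩
    exact ⟨c, fun hc0 => hi (by rw [hc0]; rfl), (key_iff H hg s c).2 hsum⟩


end Aux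

section Aux2

variable {E : Type} [DecidableEq E] (H : Submodule ℂ (l2 E)) [Submodule.HasOrthogonalProjection H]

local notation "⟪" x ", " y "⟫" => inner (𝕜 := ℂ) x y

lemma measurableEv {ι : Type} [Countable ι] (g : ι → E) (s : ι → Bool) :
    MeasurableSet {η : E → Bool | ∀ i, η (g i) = s i} := by
  have h : {η : E → Bool | ∀ i, η (g i) = s i} =
      ⋂ i, (fun η : E → Bool => η (g i)) ⁻¹' {s i} := by
    ext η; simp
  rw [h]
  exact MeasurableSet.iInter fun i => (measurable_pi_apply (g i)) (measurableSet_singleton _)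

lemma meas_eq_det (P : Measure (E → Bool)) [IsProbabilityMeasure P]
    (hPdet : IsDeterminantalSubspace H P) :
    ∀ (n : ℕ) {ι : Type} [Fintype ι] [DecidableEq ι] (g : ι → E) (s : ι → Bool),
      Function.Injective g → (Finset.univ.filter fun i => s i = false).card = n →
      ((P {η : E → Bool | ∀ i, η (g i) = s i}).toReal : ℂ) = (detMat H g s).det := by
  intro n
  induction n with
  | zero =>
    intro ι _ _ g s hg hcard
    have hs : ∀ i, s i = true := by
      intro i
      by_contra hi
      have : i ∈ Finset.univ.filter fun i => s i = false := by
        simp [Finset.mem_filter, Bool.not_eq_true] at hi ⊢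
        exact hi
      rw [Finset.card_eq_zero] at hcard
      rw [hcard] at this
      exact absurd this (Finset.notMem_empty i)
    set σ := Fintype.equivFin ι with hσ
    have hset : {η : E → Bool | ∀ i, η (g i) = s i} =
        {η : E → Bool | ∀ k, η ((g ∘ σ.symm) k) = true} := by
      ext η
      constructor
      · intro hη k
        rw [Function.comp_apply, hη (σ.symm k), hs]
      · intro hη i
        have := hη (σ i)
        rw [Function.comp_apply, Equiv.symm_apply_apply] at this
        rw [this, hs]
    have hmat : (detMat H g s).det =
        (Matrix.of fun k l : Fin (Fintype.card ι) =>
          inner (𝕜 := ℂ) ((Submodule.orthogonalProjectionOnto H (_root_.stdBasis ((g ∘ σ.symm) k)) : l2 E))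
            (_root_.stdBasis ((g ∘ σ.symm) l))).det := by
      rw [← Matrix.det_submatrix_equiv_self σ.symm (detMat H g s)]
      congr 1
      ext k l
      simp [detMat, hs, projKer]
    rw [hset, hmat]
    exact hPdet (Fintype.card ι) (g ∘ σ.symm) (hg.comp σ.symm.injective)
  | succ n ih =>
    intro ι _ _ g s hg hcard
    -- find an index with s i0 = false
    have hpos : 0 < (Finset.univ.filter fun i => s i = false).card := by
      rw [hcard]; exact Nat.succ_pos n
    obtain ⟨i0, hi0mem⟩ := Finset.card_pos.1 hpos
    have hi0 : s i0 = false := (Finset.mem_filter.1 hi0mem).2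
    set s' := Function.update s i0 true with hs'
    -- events
    set Ev := {η : E → Bool | ∀ i, η (g i) = s i} with hEv
    set EvT := {η : E → Bool | ∀ i, η (g i) = s' i} with hEvT
    set Ev' := {η : E → Bool | ∀ i : {i : ι // i ≠ i0}, η (g i.1) = s i.1} with hEv'
    have hunion : Ev' = Ev ∪ EvT := by
      ext η
      constructor
      · intro hη
        rcases Bool.eq_false_or_eq_true (η (g i0)) with hb | hb
        · right
          intro i
          by_cases hii : i = i0
          · rw [hii, hb, hs', Function.update_self]
          · rw [hη ⟨i, hii⟩, hs', Function.update_of_ne hii]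
        · left
          intro i
          by_cases hii : i = i0
          · rw [hii, hb, hi0]
          · exact hη ⟨i, hii⟩
      · intro hη i
        rcases hη with hη | hη
        · exact hη i.1
        · rw [hη i.1, hs', Function.update_of_ne i.2]
    have hdisj : Disjoint Ev EvT := by
      rw [Set.disjoint_left]
      intro η hη hη'
      have h1 : η (g i0) = false := by rw [hη i0, hi0]
      have h2 : η (g i0) = true := by rw [hη' i0, hs', Function.update_self]
      rw [h1] at h2
      exact Bool.false_ne_true h2
    -- measure equation
    have hmeas : (P Ev').toReal = (P Ev).toReal + (P EvT).toReal := by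
      rw [hunion, measure_union hdisj (measurableEv g s')]
      exact ENNReal.toReal_add (measure_ne_top P _) (measure_ne_top P _)
    -- cardinality bookkeeping
    have hcard' : (Finset.univ.filter fun i => s' i = false).card = n := by
      have hfe : (Finset.univ.filter fun i => s' i = false) =
          (Finset.univ.filter fun i => s i = false).erase i0 := by
        ext j
        simp only [Finset.mem_filter, Finset.mem_erase, Finset.mem_univ, true_and, hs']
        by_cases hj : j = i0
        · subst hj
          simp [Function.update_self]
        · simp [Function.update_of_ne hj, hj]
      rw [hfe, Finset.card_erase_of_mem hi0mem, hcard]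
      rfl
    have hcard'' : (Finset.univ.filter fun i : {i : ι // i ≠ i0} => s i.1 = false).card = n := by
      have := Finset.card_bij' (s := Finset.univ.filter fun i : {i : ι // i ≠ i0} => s i.1 = false)
        (t := (Finset.univ.filter fun i => s i = false).erase i0)
        (i := fun a _ => a.1)
        (j := fun b hb => ⟨b, (Finset.mem_erase.1 hb).1⟩)
        (fun a ha => by
          rcases Finset.mem_filter.1 ha with ⟨-, ha2⟩
          exact Finset.mem_erase.2 ⟨a.2, Finset.mem_filter.2 ⟨Finset.mem_univ _, ha2⟩⟩)
        (fun b hb => by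
          rcases Finset.mem_erase.1 hb with ⟨hb1, hb2⟩
          exact Finset.mem_filter.2 ⟨Finset.mem_univ _, (Finset.mem_filter.1 hb2).2⟩)
        (fun a _ => rfl)
        (fun b _ => rfl)
      rw [this, Finset.card_erase_of_mem hi0mem, hcard]
      rfl
    have hg'' : Function.Injective fun i : {i : ι // i ≠ i0} => g i.1 :=
      fun a b hab => Subtype.ext (hg hab)
    -- apply induction hypotheses
    have ih1 := ih (fun i : {i : ι // i ≠ i0} => g i.1) (fun i => s i.1) hg'' hcard''
    have ih2 := ih g s' hg hcard'
    -- the δ-row matrix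
    set Mδ := Matrix.updateRow (detMat H g s) i0 (fun j => if i0 = j then 1 else 0) with hMδ
    have hdet1 : Mδ.det = (detMat H g s).det + (detMat H g s').det := by
      have hrow : (fun j => if i0 = j then (1 : ℂ) else 0) =
          (fun j => detMat H g s i0 j) + (fun j => projKer H (g i0) (g j)) := by
        funext j
        simp only [detMat, Matrix.of_apply, hi0, Pi.add_apply, Bool.false_eq_true, if_false]
        ring
      rw [hMδ, hrow, Matrix.det_updateRow_add, Matrix.updateRow_eq_self]
      congr 1
      have hupd : Matrix.updateRow (detMat H g s) i0 (fun j => projKer H (g i0) (g j)) =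
          detMat H g s' := by
        ext i j
        by_cases hii : i = i0
        · subst hii
          rw [Matrix.updateRow_self]
          simp [detMat, hs', Function.update_self]
        · rw [Matrix.updateRow_ne hii]
          simp [detMat, hs', Function.update_of_ne hii]
      rw [hupd]
    have hdet2 : Mδ.det = (detMat H (fun i : {i : ι // i ≠ i0} => g i.1) (fun i => s i.1)).det := by
      set e := (Equiv.sumCompl (fun i : ι => i = i0)) with he
      have hsub : Mδ.submatrix e e =
          Matrix.fromBlocks 1 0
            (Matrix.of fun (i : {i : ι // ¬ i = i0}) (j : {i : ι // i = i0}) => Mδ i.1 j.1)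
            (detMat H (fun i : {i : ι // i ≠ i0} => g i.1) (fun i => s i.1)) := by
        ext i j
        rcases i with ⟨iv, hiv⟩ | ⟨iv, hiv⟩ <;> rcases j with ⟨jv, hjv⟩ | ⟨jv, hjv⟩
        · simp only [Matrix.submatrix_apply, he, Equiv.sumCompl_apply_inl,
            Matrix.fromBlocks_apply₁₁, hMδ]
          have h1 : (⟨iv, hiv⟩ : {a : ι // a = i0}) = ⟨jv, hjv⟩ :=
            Subtype.ext (hiv.trans hjv.symm)
          rw [h1]
          conv_lhs => rw [hiv, hjv]
          rw [Matrix.updateRow_self, if_pos rfl, Matrix.one_apply_eq]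
        · simp only [Matrix.submatrix_apply, he, Equiv.sumCompl_apply_inl,
            Equiv.sumCompl_apply_inr, Matrix.fromBlocks_apply₁₂, hMδ]
          conv_lhs => rw [hiv]
          rw [Matrix.updateRow_self, if_neg (fun hh => hjv hh.symm)]
          simp
        · simp only [Matrix.submatrix_apply, he, Equiv.sumCompl_apply_inl,
            Equiv.sumCompl_apply_inr, Matrix.fromBlocks_apply₂₁, Matrix.of_apply]
        · simp only [Matrix.submatrix_apply, he, Equiv.sumCompl_apply_inr,
            Matrix.fromBlocks_apply₂₂, hMδ]
          rw [Matrix.updateRow_ne hiv]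
          simp only [detMat, Matrix.of_apply]
          by_cases hij : iv = jv
          · subst hij
            simp
          · have h2 : ¬ ((⟨iv, hiv⟩ : {i : ι // i ≠ i0}) = ⟨jv, hjv⟩) := by
              simp [Subtype.ext_iff, hij]
            simp [hij, h2]
      rw [← Matrix.det_submatrix_equiv_self e Mδ, hsub, Matrix.det_fromBlocks_zero₁₂,
        Matrix.det_one, one_mul]
    -- conclude
    have hEq : ((P Ev).toReal : ℂ) + ((P EvT).toReal : ℂ) =
        (detMat H g s).det + (detMat H g s').det := by
      have : ((P Ev').toReal : ℂ) = ((P Ev).toReal : ℂ) + ((P EvT).toReal : ℂ) := by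
        rw [hmeas]; push_cast; ring
      rw [← this, ih1, ← hdet2, hdet1]
    have := ih2
    rw [← hEvT] at this
    calc ((P Ev).toReal : ℂ)
        = ((P Ev).toReal : ℂ) + ((P EvT).toReal : ℂ) - ((P EvT).toReal : ℂ) := by ring
      _ = (detMat H g s).det + (detMat H g s').det - (detMat H g s').det := by rw [hEq, this]
      _ = (detMat H g s).det := by ring


end Aux2

/-- For a closed subspace `H` of `ℓ²(E)` and disjoint finite `A, B ⊆ E`,
`P^H[η ≡ 1 on A, η ≡ 0 on B] > 0` iff the family
`{P_H e}_{e ∈ A} ∪ {P_{H^⊥} e}_{e ∈ B}` is linearly independent. -/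
theorem statement8 {E : Type} [Countable E] [DecidableEq E]
    (H : Submodule ℂ (l2 E)) (hH : IsClosed (H : Set (l2 E)))
    [Submodule.HasOrthogonalProjection H]
    (P : Measure (E → Bool)) (hP : IsProbabilityMeasure P)
    (hPdet : IsDeterminantalSubspace H P)
    (A B : Finset E) (hAB : Disjoint A B) :
    0 < P {η : E → Bool | (∀ a ∈ A, η a = true) ∧ (∀ b ∈ B, η b = false)} ↔
      LinearIndependent ℂ
        (Sum.elim
          (fun a : ↥A => ((Submodule.orthogonalProjectionOnto H (stdBasis (a : E))) : l2 E))
          (fun b : ↥B => ((Submodule.orthogonalProjectionOnto Hᗮ (stdBasis (b : E))) : l2 E))) := by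
  classical
  set g : (↥A ⊕ ↥B) → E := Sum.elim (fun a => (a : E)) (fun b => (b : E)) with hgdef
  set s : (↥A ⊕ ↥B) → Bool := Sum.elim (fun _ => true) (fun _ => false) with hsdef
  have hg : Function.Injective g := by
    rintro (a | a) (b | b) h
    · simp only [hgdef, Sum.elim_inl] at h
      exact congrArg Sum.inl (Subtype.ext h)
    · exfalso
      simp only [hgdef, Sum.elim_inl, Sum.elim_inr] at h
      have hmem : (a : E) ∈ B := by rw [h]; exact b.2
      exact (Finset.disjoint_left.1 hAB) a.2 hmem
    · exfalso
      simp only [hgdef, Sum.elim_inl, Sum.elim_inr] at h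
      have hmem : (b : E) ∈ B := by rw [← h]; exact a.2
      exact (Finset.disjoint_left.1 hAB) b.2 hmem
    · simp only [hgdef, Sum.elim_inr] at h
      exact congrArg Sum.inr (Subtype.ext h)
  have hset : {η : E → Bool | (∀ a ∈ A, η a = true) ∧ (∀ b ∈ B, η b = false)} =
      {η : E → Bool | ∀ i, η (g i) = s i} := by
    ext η
    constructor
    · rintro ⟨h1, h2⟩ (a | b)
      · exact h1 a a.2
      · exact h2 b b.2
    · intro h
      exact ⟨fun a ha => h (Sum.inl ⟨a, ha⟩), fun b hb => h (Sum.inr ⟨b, hb⟩)⟩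
  have hmeq := meas_eq_det H P hPdet ((Finset.univ.filter fun i => s i = false).card) g s hg rfl
  have hfam : (Sum.elim
      (fun a : ↥A => ((Submodule.orthogonalProjectionOnto H (stdBasis (a : E))) : l2 E))
      (fun b : ↥B => ((Submodule.orthogonalProjectionOnto Hᗮ (stdBasis (b : E))) : l2 E))) = vfam H g s := by
    funext i
    rcases i with a | b
    · simp [vfam, hgdef, hsdef]
    · simp [vfam, hgdef, hsdef]
  rw [hset, hfam, ← det_ne_zero_iff_linearIndependent H hg s]
  have hne : P {η : E → Bool | ∀ i, η (g i) = s i} ≠ ⊤ := measure_ne_top P _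
  rw [pos_iff_ne_zero]
  constructor
  · intro h0 hdet
    rw [hdet] at hmeq
    have htr : (P {η : E → Bool | ∀ i, η (g i) = s i}).toReal = 0 := by exact_mod_cast hmeq
    exact h0 (((ENNReal.toReal_eq_zero_iff _).1 htr).resolve_right hne)
  · intro hdet h0
    apply hdet
    rw [← hmeq, h0]
    simp

end
end
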